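/- Let G° = ⟨x, y² ⟩ ≤ D_{2,8,5} = ⟨x, y | x² = y⁸ = 1, x y x⁻¹ = y⁵⟩. Then G° ≅ Z_2 × Z_4, G° has index 2 in D_{2,8,5}, the centralizer of x in D_{2,8,5} is contained in G°, and for every g ∈ D_{2,8,5} \ G°, g² ∈ ⟨y⟩ and g² ∉ {σ x σ⁻¹ : σ ∈ G°}. -/
import Mathlib

namespace D285aux

variable {G : Type*} [Group G]

/-- normal form element `x^a y^b`. -/
def F (x y : G) (a : ZMod 2) (b : ZMod 8) : G := x ^ a.val * y ^ b.val

theorem xinv {x : G} (hx : x ^ 2 = 1) : x⁻¹ = x := by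
  have : x * x = 1 := by rw [← pow_two]; exact hx
  exact inv_eq_of_mul_eq_one_right this |>.symm ▸ (inv_eq_of_mul_eq_one_right this)

theorem yx {x y : G} (hx : x ^ 2 = 1) (hconj : x * y * x⁻¹ = y ^ 5) :
    y * x = x * y ^ 5 := by
  have hxx : x * x = 1 := by rw [← pow_two]; exact hx
  have h1 : x * y ^ 5 = x * (x * y * x⁻¹) := by rw [hconj]
  rw [xinv hx] at h1
  calc y * x = 1 * y * x := by rw [one_mul]
    _ = (x * x) * y * x := by rw [hxx]
    _ = x * (x * y * x) := by group
    _ = x * y ^ 5 := h1.symm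

theorem ynx {x y : G} (hx : x ^ 2 = 1) (hconj : x * y * x⁻¹ = y ^ 5) :
    ∀ n : ℕ, y ^ n * x = x * y ^ (5 * n) := by
  intro n
  induction n with
  | zero => simp
  | succ n ih =>
    calc y ^ (n + 1) * x = y * (y ^ n * x) := by rw [pow_succ']; group
      _ = y * (x * y ^ (5 * n)) := by rw [ih]
      _ = (y * x) * y ^ (5 * n) := by group
      _ = x * y ^ 5 * y ^ (5 * n) := by rw [yx hx hconj]
      _ = x * y ^ (5 * (n + 1)) := by rw [mul_assoc, ← pow_add]; ring_nf

theorem ynxm {x y : G} (hx : x ^ 2 = 1) (hconj : x * y * x⁻¹ = y ^ 5) :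
    ∀ (m n : ℕ), y ^ n * x ^ m = x ^ m * y ^ (5 ^ m * n) := by
  intro m
  induction m with
  | zero => simp
  | succ m ih =>
    intro n
    calc y ^ n * x ^ (m + 1) = (y ^ n * x ^ m) * x := by rw [pow_succ]; group
      _ = x ^ m * y ^ (5 ^ m * n) * x := by rw [ih]
      _ = x ^ m * (y ^ (5 ^ m * n) * x) := by group
      _ = x ^ m * (x * y ^ (5 * (5 ^ m * n))) := by rw [ynx hx hconj]
      _ = x ^ (m + 1) * y ^ (5 ^ (m + 1) * n) := by
          rw [pow_succ, pow_succ]; ring_nf; group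

theorem xcast {x : G} (hx : x ^ 2 = 1) (m : ℕ) : x ^ m = x ^ (m : ZMod 2).val := by
  rw [ZMod.val_natCast]; exact pow_eq_pow_mod m hx

theorem ycast {y : G} (hy : y ^ 8 = 1) (m : ℕ) : y ^ m = y ^ (m : ZMod 8).val := by
  rw [ZMod.val_natCast]; exact pow_eq_pow_mod m hy

theorem Fmul {x y : G} (hx : x ^ 2 = 1) (hy : y ^ 8 = 1) (hconj : x * y * x⁻¹ = y ^ 5)
    (a c : ZMod 2) (b d : ZMod 8) :
    F x y a b * F x y c d = F x y (a + c) (b * 5 ^ c.val + d) := by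
  unfold F
  calc x ^ a.val * y ^ b.val * (x ^ c.val * y ^ d.val)
      = x ^ a.val * (y ^ b.val * x ^ c.val) * y ^ d.val := by group
    _ = x ^ a.val * (x ^ c.val * y ^ (5 ^ c.val * b.val)) * y ^ d.val := by
        rw [ynxm hx hconj]
    _ = (x ^ a.val * x ^ c.val) * (y ^ (5 ^ c.val * b.val) * y ^ d.val) := by group
    _ = x ^ (a.val + c.val) * y ^ (5 ^ c.val * b.val + d.val) := by
        rw [pow_add, pow_add]
    _ = x ^ (a + c).val * y ^ (b * 5 ^ c.val + d).val := by
        have e1 : ((a.val + c.val : ℕ) : ZMod 2) = a + c := by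
          push_cast; simp [ZMod.natCast_val, ZMod.cast_id]
        have e2 : ((5 ^ c.val * b.val + d.val : ℕ) : ZMod 8) = b * 5 ^ c.val + d := by
          push_cast; simp [ZMod.natCast_val, ZMod.cast_id]; ring
        rw [xcast hx (a.val + c.val), ycast hy (5 ^ c.val * b.val + d.val), e1, e2]

theorem Fone (x y : G) : F x y 0 0 = 1 := by simp [F]

end D285aux

namespace D285aux

variable {G : Type*} [Group G]

def Hgp (x y : G) (hx : x ^ 2 = 1) (hy : y ^ 8 = 1) (hconj : x * y * x⁻¹ = y ^ 5) :
    Subgroup G where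
  carrier := Set.range (fun p : ZMod 2 × ZMod 8 => F x y p.1 p.2)
  one_mem' := ⟨(0, 0), Fone x y⟩
  mul_mem' := by
    rintro _ _ ⟨⟨a, b⟩, rfl⟩ ⟨⟨c, d⟩, rfl⟩
    exact ⟨(a + c, b * 5 ^ c.val + d), (Fmul hx hy hconj a c b d).symm⟩
  inv_mem' := by
    rintro _ ⟨⟨a, b⟩, rfl⟩
    refine ⟨(a, -(b * 5 ^ a.val)), ?_⟩
    have h1 : F x y a (-(b * 5 ^ a.val)) * F x y a b = 1 := by
      rw [Fmul hx hy hconj]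
      have h2 : a + a = 0 := (show ∀ a : ZMod 2, a + a = 0 by decide) a
      have h55 : (5 : ZMod 8) ^ a.val * 5 ^ a.val = 1 :=
        (show ∀ a : ZMod 2, (5 : ZMod 8) ^ a.val * 5 ^ a.val = 1 by decide) a
      have h3 : -(b * 5 ^ a.val) * 5 ^ a.val + b = 0 := by
        calc -(b * 5 ^ a.val) * 5 ^ a.val + b
            = -(b * (5 ^ a.val * 5 ^ a.val)) + b := by ring
          _ = 0 := by rw [h55]; ring
      rw [h2, h3, Fone]
    exact eq_inv_of_mul_eq_one_left h1

def phi (x w : G) (hx : x ^ 2 = 1) (hw4 : w ^ 4 = 1) (hcw : Commute w x) :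
    Multiplicative (ZMod 2 × ZMod 4) →* G where
  toFun p := x ^ (Multiplicative.toAdd p).1.val * w ^ (Multiplicative.toAdd p).2.val
  map_one' := by simp
  map_mul' p q := by
    simp only [toAdd_mul, Prod.fst_add, Prod.snd_add]
    rw [(hcw.pow_pow _ _).mul_mul_mul_comm, ← pow_add, ← pow_add,
      ZMod.val_add, ZMod.val_add, ← pow_eq_pow_mod _ hx, ← pow_eq_pow_mod _ hw4]

theorem phi_apply (x w : G) (hx : x ^ 2 = 1) (hw4 : w ^ 4 = 1) (hcw : Commute w x)
    (p : Multiplicative (ZMod 2 × ZMod 4)) :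
    phi x w hx hw4 hcw p
      = x ^ (Multiplicative.toAdd p).1.val * w ^ (Multiplicative.toAdd p).2.val := rfl

end D285aux

open D285aux

set_option maxHeartbeats 1000000

/-- In `D_{2,8,5} = ⟨x, y | x² = y⁸ = 1, xyx⁻¹ = y⁵⟩` of order 16, the subgroup
`G° = ⟨x, y²⟩` is isomorphic to `Z₂ × Z₄`, has index 2, contains the centralizer
of `x`, and every `g ∉ G°` satisfies `g² ∈ ⟨y⟩` with `g²` not conjugate in `G°` to `x`. -/
theorem D285_mixed_conditions {G : Type*} [Group G] (hG : Nat.card G = 16)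
    (x y : G) (hx : x ^ 2 = 1) (hy : y ^ 8 = 1) (hconj : x * y * x⁻¹ = y ^ 5)
    (hgen : Subgroup.closure {x, y} = ⊤) :
    Nonempty (↥(Subgroup.closure {x, y ^ 2}) ≃* Multiplicative (ZMod 2 × ZMod 4)) ∧
    (Subgroup.closure {x, y ^ 2} : Subgroup G).index = 2 ∧
    Subgroup.centralizer {x} ≤ Subgroup.closure {x, y ^ 2} ∧
    (∀ g : G, g ∉ Subgroup.closure {x, y ^ 2} →
      g ^ 2 ∈ Subgroup.zpowers y ∧
      ∀ σ ∈ Subgroup.closure {x, y ^ 2}, g ^ 2 ≠ σ * x * σ⁻¹) := by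
  have hfin : Finite G := Nat.finite_of_card_ne_zero (by omega)
  have hxx : x * x = 1 := by rw [← pow_two]; exact hx
  have hFx : F x y 1 0 = x := by
    have h1 : (1 : ZMod 2).val = 1 := rfl
    have h0 : (0 : ZMod 8).val = 0 := rfl
    simp [F, h1, h0]
  have hFy : F x y 0 1 = y := by
    have h1 : (1 : ZMod 8).val = 1 := rfl
    have h0 : (0 : ZMod 2).val = 0 := rfl
    simp [F, h1, h0]
  -- surjectivity of the normal form map
  have hsurj : Function.Surjective (fun p : ZMod 2 × ZMod 8 => F x y p.1 p.2) := by
    intro g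
    have hle : Subgroup.closure {x, y} ≤ Hgp x y hx hy hconj := by
      rw [Subgroup.closure_le]
      rintro z hz
      rcases hz with rfl | hz
      · exact ⟨(1, 0), hFx⟩
      · rcases hz with rfl
        exact ⟨(0, 1), hFy⟩
    exact hle (by rw [hgen]; exact Subgroup.mem_top g)
  have hbij : Function.Bijective (fun p : ZMod 2 × ZMod 8 => F x y p.1 p.2) := by
    rw [Nat.bijective_iff_surjective_and_card]
    refine ⟨hsurj, ?_⟩
    rw [hG, Nat.card_prod, Nat.card_zmod, Nat.card_zmod]
  have hinjF : ∀ (a c : ZMod 2) (b d : ZMod 8), F x y a b = F x y c d → a = c ∧ b = d := by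
    intro a c b d h
    have h2 := hbij.1 (a₁ := (a, b)) (a₂ := (c, d)) h
    exact ⟨congrArg Prod.fst h2, congrArg Prod.snd h2⟩
  have hx_ne : ∀ b : ZMod 8, F x y 0 b ≠ x := by
    intro b h
    have h2 : F x y 0 b = F x y 1 0 := h.trans hFx.symm
    exact absurd (hinjF _ _ _ _ h2).1 (by decide)
  have hxmem : x ∈ Subgroup.closure ({x, y ^ 2} : Set G) :=
    Subgroup.subset_closure (Set.mem_insert _ _)
  have hwmem : y ^ 2 ∈ Subgroup.closure ({x, y ^ 2} : Set G) :=
    Subgroup.subset_closure (Set.mem_insert_of_mem _ rfl)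
  -- x commutes with y^2
  have hy10 : y ^ (5 * 2) = y ^ 2 := by
    rw [pow_eq_pow_mod (5 * 2) hy]
  have hy2x : y ^ 2 * x = x * y ^ 2 := by
    rw [ynx hx hconj 2, hy10]
  -- conjugation by the subgroup fixes x
  have hfix : ∀ σ ∈ Subgroup.closure ({x, y ^ 2} : Set G), σ * x * σ⁻¹ = x := by
    intro σ hσ
    induction hσ using Subgroup.closure_induction with
    | mem z hz =>
      rcases hz with rfl | hz
      · rw [xinv hx, mul_assoc, hxx, mul_one]
      · rcases hz with rfl
        rw [hy2x]
        exact mul_inv_cancel_right x (y ^ 2)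
    | one => simp
    | mul a b _ _ ha hb =>
      calc (a * b) * x * (a * b)⁻¹ = a * (b * x * b⁻¹) * a⁻¹ := by group
        _ = x := by rw [hb, ha]
    | inv a _ ha =>
      calc a⁻¹ * x * a⁻¹⁻¹ = a⁻¹ * (a * x * a⁻¹) * a := by rw [ha]; group
        _ = x := by group
  -- squares
  have hsq : ∀ g : G, ∃ c : ZMod 8, g ^ 2 = F x y 0 c := by
    intro g
    obtain ⟨⟨a, b⟩, rfl⟩ := hsurj g
    refine ⟨b * 5 ^ a.val + b, ?_⟩
    rw [pow_two]
    rw [Fmul hx hy hconj]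
    congr 1
    exact (show ∀ a : ZMod 2, a + a = 0 by decide) a
  have hzp : ∀ c : ZMod 8, F x y 0 c ∈ Subgroup.zpowers y := by
    intro c
    rw [Subgroup.mem_zpowers_iff]
    refine ⟨(c.val : ℤ), ?_⟩
    rw [zpow_natCast, F, show (0 : ZMod 2).val = 0 from rfl, pow_zero, one_mul]
  -- centralizer
  have hcent : Subgroup.centralizer {x} ≤ Subgroup.closure {x, y ^ 2} := by
    intro g hg
    rw [Subgroup.mem_centralizer_iff] at hg
    obtain ⟨⟨a, b⟩, rfl⟩ := hsurj g
    have hgx : x * F x y a b = F x y a b * x := hg x rfl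
    have h1 := Fmul hx hy hconj a 1 b 0
    rw [hFx] at h1
    simp only [show (1 : ZMod 2).val = 1 from rfl, pow_one, add_zero] at h1
    have h2 := Fmul hx hy hconj 1 a 0 b
    rw [hFx] at h2
    simp only [zero_mul, zero_add] at h2
    rw [h1, h2] at hgx
    obtain ⟨-, h4⟩ := hinjF _ _ _ _ hgx
    have hb : 2 ∣ b.val := by
      revert h4
      exact (show ∀ b : ZMod 8, b = b * 5 → 2 ∣ b.val by decide) b
    obtain ⟨k, hk⟩ := hb
    have hF : F x y a b = x ^ a.val * (y ^ 2) ^ k := by rw [F, hk, pow_mul]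
    show F x y a b ∈ Subgroup.closure {x, y ^ 2}
    rw [hF]
    exact mul_mem (pow_mem hxmem _) (pow_mem hwmem _)
  -- the homomorphism from Z2 × Z4
  have hw4 : (y ^ 2) ^ 4 = 1 := by rw [← pow_mul]; exact hy
  have hcw : Commute (y ^ 2) x := hy2x
  set φ : Multiplicative (ZMod 2 × ZMod 4) →* G := phi x (y ^ 2) hx hw4 hcw with hφdef
  have hφ := phi_apply x (y ^ 2) hx hw4 hcw
  have hφinj : Function.Injective φ := by
    rw [injective_iff_map_eq_one]
    intro p hp
    rw [hφ] at hp
    set a := (Multiplicative.toAdd p).1 with ha'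
    set b := (Multiplicative.toAdd p).2 with hb'
    have hp' : x ^ a.val * y ^ (2 * b.val) = 1 := by rw [pow_mul]; exact hp
    have hFp : F x y (a.val : ZMod 2) ((2 * b.val : ℕ) : ZMod 8) = F x y 0 0 := by
      rw [Fone, F, ← xcast hx, ← ycast hy]
      exact hp'
    obtain ⟨h1, h2⟩ := hinjF _ _ _ _ hFp
    have ha : a = 0 := by
      have hd := (ZMod.natCast_eq_zero_iff a.val 2).mp h1
      have hlt := a.val_lt
      have : a.val = 0 := by omega
      exact (ZMod.val_eq_zero a).mp this
    have hb : b = 0 := by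
      have hd := (ZMod.natCast_eq_zero_iff (2 * b.val) 8).mp h2
      have hlt := b.val_lt
      have : b.val = 0 := by omega
      exact (ZMod.val_eq_zero b).mp this
    have h0 : Multiplicative.toAdd p = 0 := Prod.ext (ha' ▸ ha) (hb' ▸ hb)
    exact Multiplicative.toAdd.injective (h0.trans toAdd_one.symm)
  have hφrange : φ.range = Subgroup.closure {x, y ^ 2} := by
    apply le_antisymm
    · rintro g ⟨p, rfl⟩
      rw [hφ]
      exact mul_mem (pow_mem hxmem _) (pow_mem hwmem _)
    · rw [Subgroup.closure_le]
      rintro z hz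
      rcases hz with rfl | hz
      · refine ⟨Multiplicative.ofAdd (1, 0), ?_⟩
        rw [hφ]
        simp [show ((1 : ZMod 2)).val = 1 from rfl]
      · rcases hz with rfl
        refine ⟨Multiplicative.ofAdd (0, 1), ?_⟩
        rw [hφ]
        simp [show ((1 : ZMod 4)).val = 1 from rfl]
  have iso : ↥(Subgroup.closure {x, y ^ 2}) ≃* Multiplicative (ZMod 2 × ZMod 4) :=
    ((MonoidHom.ofInjective hφinj).trans (MulEquiv.subgroupCongr hφrange)).symm
  have hc8 : Nat.card (Subgroup.closure {x, y ^ 2} : Subgroup G) = 8 := by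
    rw [Nat.card_congr iso.toEquiv, Nat.card_congr Multiplicative.toAdd,
      Nat.card_prod, Nat.card_zmod, Nat.card_zmod]
  have hidx := Subgroup.card_mul_index (Subgroup.closure {x, y ^ 2} : Subgroup G)
  rw [hc8, hG] at hidx
  refine ⟨⟨iso⟩, by omega, hcent, ?_⟩
  intro g _
  obtain ⟨c, hc⟩ := hsq g
  refine ⟨hc ▸ hzp c, ?_⟩
  intro σ hσ heq
  rw [hfix σ hσ, hc] at heq
  exact hx_ne c heq
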